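/- Let X be a nonempty metric space with finite ultrametric pseudodiameter c = diam_u X, and let t be any real number with t > c. Then there exists a nonempty path-connected metric space Y with d_GH(X, Y) ≤ t/2. Consequently, the infimum of d_GH(X, Y) over all path-connected metric spaces Y equals c/2, and it coincides with the infimum of d_GH(X, Y) over all dotted connected Y. -/

import Mathlib

open scoped ENNReal

noncomputable section

/-- Ultrametric pseudodistance: infimum over chains from `x` to `y` of the
maximal edge length of the chain. -/
noncomputable def ultraDist {X : Type*} [MetricSpace X] (x y : X) : ℝ≥0∞ :=
  ⨅ (n : ℕ) (f : Fin (n + 1) → X) (_ : f 0 = x) (_ : f (Fin.last n) = y),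
    ⨆ i : Fin n, edist (f i.castSucc) (f i.succ)

/-- Ultrametric pseudodiameter. -/
noncomputable def ultraDiam (X : Type*) [MetricSpace X] : ℝ≥0∞ :=
  ⨆ (x : X) (y : X), ultraDist x y

/-- A correspondence between `X` and `Y`: a relation whose projections are surjective. -/
def IsCorrespondence {X Y : Type*} (R : Set (X × Y)) : Prop :=
  (∀ x : X, ∃ y : Y, (x, y) ∈ R) ∧ (∀ y : Y, ∃ x : X, (x, y) ∈ R)

/-- Distortion of a relation. -/
noncomputable def distortion {X Y : Type*} [MetricSpace X] [MetricSpace Y]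
    (R : Set (X × Y)) : ℝ≥0∞ :=
  ⨆ (p ∈ R) (q ∈ R), ENNReal.ofReal |dist p.1 q.1 - dist p.2 q.2|

/-- Gromov–Hausdorff distance: half the infimal distortion of correspondences. -/
noncomputable def ghDist (X Y : Type*) [MetricSpace X] [MetricSpace Y] : ℝ≥0∞ :=
  (⨅ (R : Set (X × Y)) (_ : IsCorrespondence R), distortion R) / 2


open scoped NNReal

universe u

section AuxChains

variable {X : Type*} [MetricSpace X]

lemma ultraDist_le_chain {n : ℕ} (f : Fin (n + 1) → X) {x y : X}
    (h0 : f 0 = x) (hl : f (Fin.last n) = y) :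
    ultraDist x y ≤ ⨆ i : Fin n, edist (f i.castSucc) (f i.succ) :=
  iInf_le_of_le n (iInf_le_of_le f (iInf_le_of_le h0 (iInf_le _ hl)))

lemma ultraDist_le_edist (x y : X) : ultraDist x y ≤ edist x y := by
  have h := ultraDist_le_chain (n := 1) (x := x) (y := y) ![x, y] rfl rfl
  simpa using h

lemma ultraDist_lt_iff {x y : X} {T : ℝ≥0∞} :
    ultraDist x y < T ↔ ∃ (n : ℕ) (f : Fin (n + 1) → X), f 0 = x ∧ f (Fin.last n) = y ∧
      (⨆ i : Fin n, edist (f i.castSucc) (f i.succ)) < T := by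
  rw [ultraDist]
  simp only [iInf_lt_iff, exists_prop]

lemma reflTransGen_of_ultraDist_lt {x y : X} {T : ℝ≥0∞} (h : ultraDist x y < T) :
    Relation.ReflTransGen (fun a b : X => edist a b < T) x y := by
  obtain ⟨n, f, h0, hl, hsup⟩ := ultraDist_lt_iff.1 h
  subst h0 hl
  have key : ∀ j : Fin (n + 1),
      Relation.ReflTransGen (fun a b : X => edist a b < T) (f 0) (f j) := by
    intro j
    induction j using Fin.induction with
    | zero => exact .refl
    | succ i ih =>
        exact ih.tail
          ((le_iSup (fun i : Fin n => edist (f i.castSucc) (f i.succ)) i).trans_lt hsup)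
  exact key _

lemma ultraDist_lt_trans {x y z : X} {T : ℝ≥0∞} (hxy : ultraDist x y < T)
    (hyz : edist y z < T) : ultraDist x z < T := by
  obtain ⟨n, f, h0, hl, hsup⟩ := ultraDist_lt_iff.1 hxy
  set g : Fin (n + 2) → X := Fin.snoc f z with hg
  have h0' : g 0 = x := by
    rw [hg, show (0 : Fin (n + 2)) = Fin.castSucc 0 by simp, Fin.snoc_castSucc, h0]
  have hl' : g (Fin.last (n + 1)) = z := by rw [hg, Fin.snoc_last]
  refine (ultraDist_le_chain g h0' hl').trans_lt ?_
  refine (iSup_le fun i => ?_).trans_lt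
    (max_lt hsup hyz : max (⨆ i : Fin n, edist (f i.castSucc) (f i.succ)) (edist y z) < T)
  induction i using Fin.lastCases with
  | last =>
      have h1 : g (Fin.last n).castSucc = y := by rw [hg, Fin.snoc_castSucc, hl]
      have h2 : g (Fin.last n).succ = z := by
        rw [show (Fin.last n).succ = Fin.last (n + 1) from rfl, hl']
      rw [h1, h2]
      exact le_max_right _ _
  | cast j =>
      have h1 : g j.castSucc.castSucc = f j.castSucc := by rw [hg, Fin.snoc_castSucc]
      have h2 : g j.castSucc.succ = f j.succ := by
        rw [Fin.succ_castSucc, hg, Fin.snoc_castSucc]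
      rw [h1, h2]
      exact le_trans (le_iSup (fun i : Fin n => edist (f i.castSucc) (f i.succ)) j)
        (le_max_left _ _)


end AuxChains

section Lower

variable {X Y : Type*} [MetricSpace X] [MetricSpace Y]

lemma ofReal_abs_le_distortion {R : Set (X × Y)} {a a' : X} {b b' : Y}
    (h : (a, b) ∈ R) (h' : (a', b') ∈ R) :
    ENNReal.ofReal |dist a a' - dist b b'| ≤ distortion R := by
  rw [distortion]
  exact le_iSup₂_of_le (a, b) h (le_iSup₂_of_le (a', b') h' le_rfl)

lemma edist_le_distortion_add {R : Set (X × Y)} {a a' : X} {b b' : Y}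
    (h : (a, b) ∈ R) (h' : (a', b') ∈ R) :
    edist a a' ≤ distortion R + edist b b' := by
  calc edist a a' = ENNReal.ofReal (dist a a') := edist_dist _ _
    _ ≤ ENNReal.ofReal (|dist a a' - dist b b'| + dist b b') := by
        refine ENNReal.ofReal_le_ofReal ?_
        have := le_abs_self (dist a a' - dist b b')
        linarith
    _ = ENNReal.ofReal |dist a a' - dist b b'| + ENNReal.ofReal (dist b b') :=
        ENNReal.ofReal_add (abs_nonneg _) dist_nonneg
    _ ≤ distortion R + edist b b' := by
        refine add_le_add (ofReal_abs_le_distortion h h') ?_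
        rw [edist_dist]

lemma ultraDiam_le_distortion (hY : ultraDiam Y = 0) {R : Set (X × Y)}
    (hR : IsCorrespondence R) : ultraDiam X ≤ distortion R := by
  by_cases hD : distortion R = ⊤
  · simp [hD]
  refine iSup₂_le fun x x' => ?_
  refine ENNReal.le_of_forall_pos_le_add fun ε hε _ => ?_
  obtain ⟨y, hy⟩ := hR.1 x
  obtain ⟨y', hy'⟩ := hR.1 x'
  have hhalf : (0 : ℝ≥0∞) < (ε / 2 : ℝ≥0) := by
    exact_mod_cast half_pos hε
  have h0 : ultraDist y y' < ((ε / 2 : ℝ≥0) : ℝ≥0∞) := by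
    refine lt_of_le_of_lt ?_ hhalf
    rw [← hY]
    exact le_iSup₂ (f := fun a b : Y => ultraDist a b) y y'
  have hrt := reflTransGen_of_ultraDist_lt h0
  have hεlt : distortion R + ((ε / 2 : ℝ≥0) : ℝ≥0∞) < distortion R + (ε : ℝ≥0∞) := by
    refine ENNReal.add_lt_add_left hD ?_
    exact_mod_cast NNReal.half_lt_self (ne_of_gt hε)
  have key : ∀ b', Relation.ReflTransGen
      (fun a b : Y => edist a b < ((ε / 2 : ℝ≥0) : ℝ≥0∞)) y b' →
      ∀ a' : X, (a', b') ∈ R → ultraDist x a' < distortion R + (ε : ℝ≥0∞) := by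
    intro b' h
    induction h with
    | refl =>
        intro a' ha'
        refine lt_of_le_of_lt ((ultraDist_le_edist x a').trans ?_)
          (ENNReal.lt_add_right hD (by exact_mod_cast hε.ne'))
        have := edist_le_distortion_add hy ha'
        simpa using this
    | @tail b c hyb hbc ih =>
        intro a' ha'
        obtain ⟨a0, ha0⟩ := hR.2 b
        refine ultraDist_lt_trans (ih a0 ha0) ?_
        calc edist a0 a' ≤ distortion R + edist b c := edist_le_distortion_add ha0 ha'
          _ ≤ distortion R + ((ε / 2 : ℝ≥0) : ℝ≥0∞) := by
              exact add_le_add le_rfl hbc.le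
          _ < distortion R + (ε : ℝ≥0∞) := hεlt
  exact (key y' hrt x' hy').le

lemma half_ultraDiam_le_ghDist (hY : ultraDiam Y = 0) :
    ultraDiam X / 2 ≤ ghDist X Y := by
  refine ENNReal.div_le_div_right ?_ 2
  exact le_iInf₂ fun R hR => ultraDiam_le_distortion hY hR

end Lower

lemma ultraDiam_eq_zero_of_pathConnected {Y : Type*} [MetricSpace Y]
    [PathConnectedSpace Y] : ultraDiam Y = 0 := by
  rw [ultraDiam]
  refine le_antisymm (iSup₂_le fun y y' => ?_) zero_le
  rw [← zero_add (0 : ℝ≥0∞)]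
  refine ENNReal.le_of_forall_pos_le_add fun ε hε _ => ?_
  rw [zero_add, zero_add]
  obtain ⟨γ⟩ : Joined y y' := PathConnectedSpace.joined y y'
  have huc : UniformContinuous γ := CompactSpace.uniformContinuous_of_continuous γ.continuous
  have hε' : (0 : ℝ) < ε := hε
  obtain ⟨δ, hδ, hδ'⟩ := Metric.uniformContinuous_iff.1 huc ε hε'
  obtain ⟨n, hn⟩ := exists_nat_one_div_lt hδ
  have hn1 : (0 : ℝ) < (n : ℝ) + 1 := by positivity
  have hmem : ∀ j : Fin (n + 2), ((j : ℝ) / ((n : ℝ) + 1)) ∈ unitInterval := by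
    intro j
    constructor
    · positivity
    · rw [div_le_one hn1]
      have : (j : ℕ) ≤ n + 1 := Fin.is_le j
      exact_mod_cast this
  set f : Fin (n + 2) → Y := fun j => γ ⟨(j : ℝ) / ((n : ℝ) + 1), hmem j⟩ with hf
  have h0 : f 0 = y := by
    have : (⟨((0 : Fin (n+2)) : ℝ) / ((n : ℝ) + 1), hmem 0⟩ : unitInterval) = 0 := by
      ext; simp
    rw [hf]; dsimp only; rw [this, γ.source]
  have hl : f (Fin.last (n + 1)) = y' := by
    have : (⟨((Fin.last (n+1) : ℕ) : ℝ) / ((n : ℝ) + 1), hmem _⟩ : unitInterval) = 1 := by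
      ext; simp [Fin.last]; exact hn1.ne'
    rw [hf]; dsimp only; rw [this, γ.target]
  refine (ultraDist_le_chain f h0 hl).trans (iSup_le fun i => ?_)
  have hdist : dist (f i.castSucc) (f i.succ) < ε := by
    refine hδ' ?_
    rw [Subtype.dist_eq]
    simp only [Fin.coe_castSucc, Fin.val_succ]
    rw [Real.dist_eq]
    push_cast
    rw [div_sub_div_same]
    have : ((i : ℝ) - ((i : ℝ) + 1)) = -1 := by ring
    rw [this, abs_div, abs_neg, abs_one, abs_of_pos hn1]
    exact hn
  calc edist (f i.castSucc) (f i.succ) = ENNReal.ofReal (dist (f i.castSucc) (f i.succ)) :=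
        edist_dist _ _
    _ ≤ ENNReal.ofReal (ε : ℝ) := ENNReal.ofReal_le_ofReal hdist.le
    _ = (ε : ℝ≥0∞) := ENNReal.ofReal_coe_nnreal



section Construction

variable {X : Type u} [MetricSpace X] [Nonempty X]

/-- Kuratowski-type embedding of an arbitrary metric space into bounded
continuous functions. -/
noncomputable def kurMap (x : X) : BoundedContinuousFunction X ℝ :=
  BoundedContinuousFunction.mkOfBound
    ⟨fun z => dist x z - dist (Classical.arbitrary X) z, by fun_prop⟩
    (2 * dist x (Classical.arbitrary X)) (by
      intro a b
      rw [Real.dist_eq]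
      have h1 := abs_dist_sub_le x (Classical.arbitrary X) a
      have h2 := abs_dist_sub_le x (Classical.arbitrary X) b
      calc |dist x a - dist (Classical.arbitrary X) a -
            (dist x b - dist (Classical.arbitrary X) b)|
          ≤ |dist x a - dist (Classical.arbitrary X) a| +
            |dist x b - dist (Classical.arbitrary X) b| := abs_sub _ _
        _ ≤ 2 * dist x (Classical.arbitrary X) := by linarith)

lemma kurMap_apply (x z : X) :
    kurMap x z = dist x z - dist (Classical.arbitrary X) z := rfl

lemma kurMap_isometry : Isometry (kurMap (X := X)) := by
  refine Isometry.of_dist_eq fun x y => ?_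
  refine le_antisymm ?_ ?_
  · refine (BoundedContinuousFunction.dist_le dist_nonneg).2 fun z => ?_
    rw [kurMap_apply, kurMap_apply, Real.dist_eq]
    have : dist x z - dist (Classical.arbitrary X) z -
        (dist y z - dist (Classical.arbitrary X) z) = dist x z - dist y z := by ring
    rw [this]
    exact abs_dist_sub_le x y z
  · have h := BoundedContinuousFunction.dist_coe_le_dist (f := kurMap x) (g := kurMap y) y
    rw [kurMap_apply, kurMap_apply, Real.dist_eq] at h
    have hyy : dist y y = 0 := dist_self y
    rw [hyy] at h
    have : dist x y - dist (Classical.arbitrary X) y -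
        (0 - dist (Classical.arbitrary X) y) = dist x y := by ring
    rw [this, abs_of_nonneg dist_nonneg] at h
    exact h

set_option maxHeartbeats 1000000 in
lemma exists_pathConnected (X : Type u) [MetricSpace X] [Nonempty X] {t : ℝ}
    (ht : ultraDiam X < ENNReal.ofReal t) :
    ∃ (Y : Type u) (mY : MetricSpace Y),
      @PathConnectedSpace Y mY.toUniformSpace.toTopologicalSpace ∧
      @ghDist X Y _ mY ≤ ENNReal.ofReal (t / 2) := by
  have ht0 : 0 < t := by
    by_contra h
    push_neg at h
    rw [ENNReal.ofReal_eq_zero.2 h] at ht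
    exact (not_lt_of_ge zero_le) ht
  set ι : X → BoundedContinuousFunction X ℝ := kurMap with hι
  have hiso : Isometry ι := kurMap_isometry
  set S : Set (BoundedContinuousFunction X ℝ) :=
    ⋃ (p : X × X) (_ : dist p.1 p.2 ≤ t), segment ℝ (ι p.1) (ι p.2) with hS
  have hsub : ∀ a b : X, dist a b ≤ t → segment ℝ (ι a) (ι b) ⊆ S := by
    intro a b hab
    exact fun w hw => Set.mem_iUnion₂.2 ⟨(a, b), hab, hw⟩
  have hmem : ∀ x : X, ι x ∈ S := fun x =>
    hsub x x (by simp [ht0.le]) (left_mem_segment ℝ _ _)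
  have hseg : ∀ a b : X, dist a b ≤ t → JoinedIn S (ι a) (ι b) := by
    intro a b hab
    have hpc : IsPathConnected (segment ℝ (ι a) (ι b)) :=
      (convex_segment _ _).isPathConnected ⟨_, left_mem_segment ℝ _ _⟩
    exact (hpc.joinedIn _ (left_mem_segment ℝ _ _) _ (right_mem_segment ℝ _ _)).mono
      (hsub a b hab)
  have hjoin : ∀ a b : X, JoinedIn S (ι a) (ι b) := by
    intro a b
    have h1 : ultraDist a b < ENNReal.ofReal t :=
      lt_of_le_of_lt (le_iSup₂ (f := fun a b : X => ultraDist a b) a b) ht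
    have h2 := reflTransGen_of_ultraDist_lt h1
    clear h1
    induction h2 with
    | refl => exact JoinedIn.refl (hmem a)
    | tail _ hedge ih =>
        refine ih.trans (hseg _ _ ?_)
        exact le_of_lt ((edist_lt_ofReal).1 hedge)
  have hpcS : IsPathConnected S := by
    obtain ⟨x₀⟩ := ‹Nonempty X›
    refine ⟨ι x₀, hmem x₀, ?_⟩
    intro z hz
    rw [hS, Set.mem_iUnion₂] at hz
    obtain ⟨p, hp, hzseg⟩ := hz
    have hz' : JoinedIn S (ι p.1) z := by
      have hpc : IsPathConnected (segment ℝ (ι p.1) (ι p.2)) :=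
        (convex_segment _ _).isPathConnected ⟨_, left_mem_segment ℝ _ _⟩
      exact (hpc.joinedIn _ (left_mem_segment ℝ _ _) z hzseg).mono (hsub p.1 p.2 hp)
    exact (hjoin x₀ p.1).trans hz'
  refine ⟨S, inferInstance, ?_, ?_⟩
  · exact isPathConnected_iff_pathConnectedSpace.mp hpcS
  · set R : Set (X × S) := {p | dist (ι p.1) (p.2 : BoundedContinuousFunction X ℝ) ≤ t / 2}
      with hR
    have hcorr : IsCorrespondence R := by
      constructor
      · intro x
        exact ⟨⟨ι x, hmem x⟩, by simp [hR, ht0.le, div_nonneg ht0.le]⟩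
      · rintro ⟨z, hz⟩
        rw [hS, Set.mem_iUnion₂] at hz
        obtain ⟨p, hp, hzseg⟩ := hz
        obtain ⟨u, v, hu, hv, huv, hz'⟩ := hzseg
        have hd1 : dist (ι p.1) z = v * dist p.1 p.2 := by
          rw [← hz', dist_eq_norm]
          have : ι p.1 - (u • ι p.1 + v • ι p.2) = v • (ι p.1 - ι p.2) := by
            rw [show u = 1 - v by linarith]
            module
          rw [this]
          have hns : ‖v • (ι p.1 - ι p.2)‖ = |v| * ‖ι p.1 - ι p.2‖ := norm_smul (β := BoundedContinuousFunction X ℝ) v _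
          rw [hns, abs_of_nonneg hv, ← dist_eq_norm, hiso.dist_eq]
        have hd2 : dist (ι p.2) z = u * dist p.1 p.2 := by
          rw [← hz', dist_eq_norm]
          have : ι p.2 - (u • ι p.1 + v • ι p.2) = u • (ι p.2 - ι p.1) := by
            rw [show v = 1 - u by linarith]
            module
          rw [this]
          have hns : ‖u • (ι p.2 - ι p.1)‖ = |u| * ‖ι p.2 - ι p.1‖ := norm_smul (β := BoundedContinuousFunction X ℝ) u _
          rw [hns, abs_of_nonneg hu, ← dist_eq_norm, hiso.dist_eq, dist_comm]
        rcases le_or_gt v (1 / 2) with hv2 | hv2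
        · refine ⟨p.1, ?_⟩
          rw [hR, Set.mem_setOf_eq]
          calc dist (ι p.1) z = v * dist p.1 p.2 := hd1
            _ ≤ (1 / 2) * t := mul_le_mul hv2 hp dist_nonneg (by norm_num)
            _ = t / 2 := by ring
        · refine ⟨p.2, ?_⟩
          rw [hR, Set.mem_setOf_eq]
          have hu2 : u ≤ 1 / 2 := by linarith
          calc dist (ι p.2) z = u * dist p.1 p.2 := hd2
            _ ≤ (1 / 2) * t := mul_le_mul hu2 hp dist_nonneg (by norm_num)
            _ = t / 2 := by ring
    have hdis : distortion R ≤ ENNReal.ofReal t := by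
      rw [distortion]
      refine iSup₂_le fun p hp => iSup₂_le fun q hq => ?_
      refine ENNReal.ofReal_le_ofReal ?_
      rw [hR, Set.mem_setOf_eq] at hp hq
      have h1 : dist p.1 q.1 = dist (ι p.1) (ι q.1) := (hiso.dist_eq _ _).symm
      have h2 : dist p.2 q.2 = dist (p.2 : BoundedContinuousFunction X ℝ)
          (q.2 : BoundedContinuousFunction X ℝ) := Subtype.dist_eq _ _
      rw [h1, h2, ← Real.dist_eq]
      calc dist (dist (ι p.1) (ι q.1)) (dist (p.2 : BoundedContinuousFunction X ℝ) _)
          ≤ dist (ι p.1) (p.2 : BoundedContinuousFunction X ℝ) +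
            dist (ι q.1) (q.2 : BoundedContinuousFunction X ℝ) := dist_dist_dist_le _ _ _ _
        _ ≤ t / 2 + t / 2 := add_le_add hp hq
        _ = t := by ring
    calc ghDist X S = (⨅ (R' : Set (X × S)) (_ : IsCorrespondence R'), distortion R') / 2 :=
          rfl
      _ ≤ distortion R / 2 := ENNReal.div_le_div_right (iInf₂_le R hcorr) 2
      _ ≤ ENNReal.ofReal t / 2 := ENNReal.div_le_div_right hdis 2
      _ = ENNReal.ofReal (t / 2) := by
          rw [ENNReal.ofReal_div_of_pos two_pos]
          norm_num

end Construction


/-- for a nonempty metric space with finite ultrametric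
pseudodiameter `c`, for every `t > c` there is a path-connected metric space at
Gromov–Hausdorff distance at most `t/2` from `X`; consequently the infimum of
`d_GH(X,Y)` over path-connected `Y` equals `c/2`, and so does the infimum over
dotted connected `Y`. -/
theorem ghDist_inf_pathConnected {X : Type u} [MetricSpace X] [Nonempty X]
    (hfin : ultraDiam X ≠ ⊤) :
    (∀ t : ℝ, ultraDiam X < ENNReal.ofReal t →
      ∃ (Y : Type u) (mY : MetricSpace Y),
        @PathConnectedSpace Y mY.toUniformSpace.toTopologicalSpace ∧
        @ghDist X Y _ mY ≤ ENNReal.ofReal (t / 2)) ∧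
    (⨅ (Y : Type u) (mY : MetricSpace Y)
        (_ : @PathConnectedSpace Y mY.toUniformSpace.toTopologicalSpace),
        @ghDist X Y _ mY) = ultraDiam X / 2 ∧
    (⨅ (Y : Type u) (mY : MetricSpace Y) (_ : Nonempty Y) (_ : @ultraDiam Y mY = 0),
        @ghDist X Y _ mY) = ultraDiam X / 2 := by
  constructor
  · exact fun t ht => exists_pathConnected X ht
  constructor
  · refine le_antisymm ?_ ?_
    · refine ENNReal.le_of_forall_pos_le_add fun ε hε _ => ?_
      have hto : ENNReal.ofReal (ultraDiam X).toReal = ultraDiam X :=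
        ENNReal.ofReal_toReal hfin
      have hc0 : (0 : ℝ) ≤ (ultraDiam X).toReal := ENNReal.toReal_nonneg
      have hε' : (0 : ℝ) < ε := hε
      have hlt : ultraDiam X < ENNReal.ofReal ((ultraDiam X).toReal + (ε : ℝ)) := by
        rw [ENNReal.ofReal_add hc0 hε'.le, hto]
        exact ENNReal.lt_add_right hfin (ENNReal.ofReal_pos.2 hε').ne'
      obtain ⟨Y, mY, hPC, hgh⟩ := exists_pathConnected X hlt
      refine le_trans (iInf_le_of_le Y (iInf_le_of_le mY (iInf_le _ hPC))) (hgh.trans ?_)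
      have hsplit : ((ultraDiam X).toReal + (ε : ℝ)) / 2
          = (ultraDiam X).toReal / 2 + (ε : ℝ) / 2 := by ring
      rw [hsplit, ENNReal.ofReal_add (by positivity) (by positivity)]
      refine add_le_add ?_ ?_
      · rw [ENNReal.ofReal_div_of_pos two_pos, hto]
        norm_num
      · calc ENNReal.ofReal ((ε : ℝ) / 2) ≤ ENNReal.ofReal (ε : ℝ) :=
              ENNReal.ofReal_le_ofReal (by linarith)
          _ = (ε : ℝ≥0∞) := ENNReal.ofReal_coe_nnreal
    · refine le_iInf fun Y => le_iInf fun mY => le_iInf fun hPC => ?_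
      exact half_ultraDiam_le_ghDist (@ultraDiam_eq_zero_of_pathConnected Y mY hPC)
  · refine le_antisymm ?_ ?_
    · refine ENNReal.le_of_forall_pos_le_add fun ε hε _ => ?_
      have hto : ENNReal.ofReal (ultraDiam X).toReal = ultraDiam X :=
        ENNReal.ofReal_toReal hfin
      have hc0 : (0 : ℝ) ≤ (ultraDiam X).toReal := ENNReal.toReal_nonneg
      have hε' : (0 : ℝ) < ε := hε
      have hlt : ultraDiam X < ENNReal.ofReal ((ultraDiam X).toReal + (ε : ℝ)) := by
        rw [ENNReal.ofReal_add hc0 hε'.le, hto]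
        exact ENNReal.lt_add_right hfin (ENNReal.ofReal_pos.2 hε').ne'
      obtain ⟨Y, mY, hPC, hgh⟩ := exists_pathConnected X hlt
      have hne : Nonempty Y := @PathConnectedSpace.nonempty Y _ hPC
      have h0 : @ultraDiam Y mY = 0 := @ultraDiam_eq_zero_of_pathConnected Y mY hPC
      refine le_trans
        (iInf_le_of_le Y (iInf_le_of_le mY (iInf_le_of_le hne (iInf_le _ h0))))
        (hgh.trans ?_)
      have hsplit : ((ultraDiam X).toReal + (ε : ℝ)) / 2
          = (ultraDiam X).toReal / 2 + (ε : ℝ) / 2 := by ring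
      rw [hsplit, ENNReal.ofReal_add (by positivity) (by positivity)]
      refine add_le_add ?_ ?_
      · rw [ENNReal.ofReal_div_of_pos two_pos, hto]
        norm_num
      · calc ENNReal.ofReal ((ε : ℝ) / 2) ≤ ENNReal.ofReal (ε : ℝ) :=
              ENNReal.ofReal_le_ofReal (by linarith)
          _ = (ε : ℝ≥0∞) := ENNReal.ofReal_coe_nnreal
    · refine le_iInf fun Y => le_iInf fun mY => le_iInf fun _ => le_iInf fun h0 => ?_
      exact half_ultraDiam_le_ghDist h0

end
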